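/- There exist constants c₁, c₂, c₃, c₄ > 0 such that for every ε ∈ (0, 1/2) there is a neural network Φ_ε with one-dimensional input and output, at most c₁·log₂(1/ε) nonzero weights, at most c₂·log₂(1/ε) layers, and at most c₃·log₂(1/ε) neurons, whose ReLU realization g := R_ρ(Φ_ε) satisfies: (1) sup_{x∈[0,1]} |g(x) − x²| ≤ ε; (2) the function x ↦ g(x) − x² is ε-Lipschitz on [0,1]; (3) g(0) = 0; and (4) g is c₄-Lipschitz on [0,1]. -/

import Mathlib

noncomputable section

open Finset

/-- The ReLU activation function `x ↦ max 0 x`. -/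
def relu (x : ℝ) : ℝ := max 0 x

/-- A feedforward neural network with possible skip connections.
The entry `A l k i j` is the weight connecting neuron `j` of layer `k` to neuron `i` of
layer `l` (meaningful for `1 ≤ l ≤ L`, `k < l`, `i < arity l`, `j < arity k`), and
`b l i` is the bias of neuron `i` of layer `l`.  Entries outside the meaningful ranges
are irrelevant: they influence neither the realization nor the complexity counts. -/
structure NN where
  d : ℕ
  L : ℕ
  hL : 0 < L
  arity : ℕ → ℕ
  harity : arity 0 = d
  A : ℕ → ℕ → ℕ → ℕ → ℝ
  b : ℕ → ℕ → ℝ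

namespace NN

/-- The vector of neuron values at layer `l`; layer `0` is the (truncated) input, and
for `l ≥ 1` the activation `ρ` is applied componentwise. -/
def hidden (Φ : NN) (ρ : ℝ → ℝ) (x : ℕ → ℝ) : ℕ → ℕ → ℝ
  | 0 => fun i => if i < Φ.d then x i else 0
  | l + 1 => fun i =>
      ρ ((∑ k : Fin (l + 1), ∑ j ∈ Finset.range (Φ.arity k),
        Φ.A (l + 1) k i j * Φ.hidden ρ x k j) + Φ.b (l + 1) i)
  termination_by l => l
  decreasing_by exact k.isLt

/-- The realization `R_ρ(Φ)` of the network `Φ` with activation function `ρ`: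
no activation is applied in the last layer `L`. -/
def realize (Φ : NN) (ρ : ℝ → ℝ) (x : ℕ → ℝ) : ℕ → ℝ := fun i =>
  (∑ k : Fin Φ.L, ∑ j ∈ Finset.range (Φ.arity k),
    Φ.A Φ.L k i j * Φ.hidden ρ x k j) + Φ.b Φ.L i

/-- The output dimension `N_L` of a network. -/
def outDim (Φ : NN) : ℕ := Φ.arity Φ.L

/-- The number of neurons `N(Φ) = d + N_1 + … + N_L`. -/
def numNeurons (Φ : NN) : ℕ := ∑ l ∈ Finset.range (Φ.L + 1), Φ.arity l

/-- The number of nonzero weights `M(Φ)`. -/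
def numWeights (Φ : NN) : ℕ :=
  ∑ l ∈ Finset.Icc 1 Φ.L,
    ((∑ k ∈ Finset.range l,
        {p : ℕ × ℕ | p.1 < Φ.arity l ∧ p.2 < Φ.arity k ∧ Φ.A l k p.1 p.2 ≠ 0}.ncard) +
      {i : ℕ | i < Φ.arity l ∧ Φ.b l i ≠ 0}.ncard)

/-- A standard neural network: only neurons in neighboring layers are connected. -/
def IsStandard (Φ : NN) : Prop :=
  ∀ l k, l ≤ Φ.L → k + 2 ≤ l → ∀ i j, i < Φ.arity l → j < Φ.arity k → Φ.A l k i j = 0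

/-- A neural network architecture: a network all of whose entries are `0` or `1`. -/
def IsArchitecture (𝒜 : NN) : Prop :=
  (∀ l k i j, 𝒜.A l k i j = 0 ∨ 𝒜.A l k i j = 1) ∧ ∀ l i, 𝒜.b l i = 0 ∨ 𝒜.b l i = 1

/-- `Φ` has architecture `𝒜`: same layer dimensions, and nonzero entries of `Φ` occur
only at positions where `𝒜` is nonzero. -/
def HasArchitecture (Φ 𝒜 : NN) : Prop :=
  Φ.d = 𝒜.d ∧ Φ.L = 𝒜.L ∧ (∀ l, Φ.arity l = 𝒜.arity l) ∧
    (∀ l k i j, Φ.A l k i j ≠ 0 → 𝒜.A l k i j ≠ 0) ∧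
    (∀ l i, Φ.b l i ≠ 0 → 𝒜.b l i ≠ 0)

end NN

/-- Embedding of `ℝ^d` into the input signals `ℕ → ℝ` of a network. -/
def embed (d : ℕ) (x : Fin d → ℝ) : ℕ → ℝ := fun i => if h : i < d then x ⟨i, h⟩ else 0

/-- The unit cube `[0,1]^d`. -/
def cube (d : ℕ) : Set (Fin d → ℝ) := {x | ∀ i, x i ∈ Set.Icc (0 : ℝ) 1}

/-- The piecewise linear bump function `ψ`. -/
def bump (x : ℝ) : ℝ := if |x| < 1 then 1 else if |x| ≤ 2 then 2 - |x| else 0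

/-- The partition-of-unity function `φ_m(x) = ∏_l ψ(3N(x_l − m_l/N))`. -/
def pou (d N : ℕ) (m : Fin d → ℕ) (x : Fin d → ℝ) : ℝ :=
  ∏ l, bump (3 * N * (x l - m l / N))

/-- The polynomial `x ↦ ∑_{|α| ≤ n−1} c_α x^α` with coefficients `c`. -/
def poly (d n : ℕ) (c : (Fin d → Fin n) → ℝ) (x : Fin d → ℝ) : ℝ :=
  ∑ α ∈ Finset.univ.filter (fun α : Fin d → Fin n => (∑ l, (α l : ℕ)) ≤ n - 1),
    c α * ∏ l, x l ^ (α l : ℕ)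

/-- The partial derivative in the `i`-th coordinate direction. -/
def pderivAt {d : ℕ} (i : Fin d) (f : (Fin d → ℝ) → ℝ) : (Fin d → ℝ) → ℝ :=
  fun x => fderiv ℝ f x (Pi.single i 1)

/-- Iterated partial derivative `D^α f` along a list of coordinate directions. -/
def pdList {d : ℕ} : List (Fin d) → ((Fin d → ℝ) → ℝ) → ((Fin d → ℝ) → ℝ)
  | [], f => f
  | i :: t, f => pdList t (pderivAt i f)

/-- `f` lies in the `W^{n,∞}`-ball of radius `B` on `[0,1]^d`: it is `(n−1)`-times
continuously differentiable on an open set containing the cube, all partial derivatives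
of order `≤ n−1` are bounded by `B` on the cube, and those of order `n−1` are
`B`-Lipschitz on the cube with respect to the Euclidean norm. -/
def InWBall (d n : ℕ) (B : ℝ) (f : (Fin d → ℝ) → ℝ) : Prop :=
  (∃ U : Set (Fin d → ℝ), IsOpen U ∧ cube d ⊆ U ∧ ContDiffOn ℝ (n - 1 : ℕ) f U) ∧
    (∀ l : List (Fin d), l.length ≤ n - 1 → ∀ x ∈ cube d, |pdList l f x| ≤ B) ∧
    (∀ l : List (Fin d), l.length = n - 1 → ∀ x ∈ cube d, ∀ y ∈ cube d,
      |pdList l f x - pdList l f y| ≤ B * Real.sqrt (∑ i, (x i - y i) ^ 2))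

def sqNet (m : ℕ) : NN where
  d := 1
  L := m + 1
  hL := Nat.succ_pos _
  arity := fun l => if l = 0 then 1 else if l = m + 1 then 1 else 2
  harity := by simp
  A := fun l k i j =>
    if l = m + 1 then
      (if k = 0 then (if i = 0 ∧ j = 0 then 1 else 0)
       else if k ≤ m then
         (if i = 0 then (if j = 0 then -2 / 4 ^ k else if j = 1 then 4 / 4 ^ k else 0)
          else 0)
       else 0)
    else if l = k + 1 ∧ 1 ≤ l ∧ l ≤ m ∧ i < 2 then
      (if l = 1 then (if j = 0 then 1 else 0)
       else (if j = 0 then 2 else if j = 1 then -4 else 0))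
    else 0
  b := fun l i => if 1 ≤ l ∧ l ≤ m ∧ i = 1 then -(1/2) else 0

lemma sqNet_arity0 (m : ℕ) : (sqNet m).arity 0 = 1 := by simp [sqNet]
lemma sqNet_arity_mid {m l : ℕ} (h1 : 1 ≤ l) (h2 : l ≤ m) : (sqNet m).arity l = 2 := by
  simp [sqNet, show l ≠ 0 by omega, show l ≠ m + 1 by omega]
lemma sqNet_arity_top (m : ℕ) : (sqNet m).arity (m+1) = 1 := by simp [sqNet]
lemma sqNet_A_in {m : ℕ} (hm : 1 ≤ m) {i : ℕ} (hi : i < 2) : (sqNet m).A 1 0 i 0 = 1 := by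
  simp [sqNet, hi, hm, show i ≤ 1 by omega, show m ≠ 0 by omega]
lemma sqNet_A_mid0 {m n i : ℕ} (hn : n + 2 ≤ m) (hi : i < 2) :
    (sqNet m).A (n+2) (n+1) i 0 = 2 := by
  simp [sqNet, hi, show n + 1 ≠ m by omega, hn, show i ≤ 1 by omega]
lemma sqNet_A_mid1 {m n i : ℕ} (hn : n + 2 ≤ m) (hi : i < 2) :
    (sqNet m).A (n+2) (n+1) i 1 = -4 := by
  simp [sqNet, hi, show n + 1 ≠ m by omega, hn, show i ≤ 1 by omega]
lemma sqNet_A_top0 (m : ℕ) : (sqNet m).A (m+1) 0 0 0 = 1 := by simp [sqNet]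
lemma sqNet_A_topk0 {m k : ℕ} (hk : 1 ≤ k) (hk2 : k ≤ m) :
    (sqNet m).A (m+1) k 0 0 = -2/4^k := by
  simp [sqNet, show k ≠ 0 by omega, hk2]
lemma sqNet_A_topk1 {m k : ℕ} (hk : 1 ≤ k) (hk2 : k ≤ m) :
    (sqNet m).A (m+1) k 0 1 = 4/4^k := by
  simp [sqNet, show k ≠ 0 by omega, hk2]
lemma sqNet_b1 {m l : ℕ} (h1 : 1 ≤ l) (h2 : l ≤ m) : (sqNet m).b l 1 = -(1/2) := by
  simp [sqNet, h1, h2]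
lemma sqNet_b0 (m l : ℕ) : (sqNet m).b l 0 = 0 := by simp [sqNet]
lemma sqNet_b_top (m : ℕ) : (sqNet m).b (m+1) 0 = 0 := sqNet_b0 m (m+1)
lemma sqNet_A_zero {m l k : ℕ} (hl1 : 1 ≤ l) (hlm : l ≤ m) (hk : k + 1 ≠ l) (i j : ℕ) :
    (sqNet m).A l k i j = 0 := by
  simp only [sqNet]
  rw [if_neg (by omega), if_neg (by tauto)]

def tent (x : ℝ) : ℝ := 2 * relu x - 4 * relu (x - 1/2)
lemma relu_of_nonneg {x : ℝ} (h : 0 ≤ x) : relu x = x := max_eq_right h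
lemma relu_of_nonpos {x : ℝ} (h : x ≤ 0) : relu x = 0 := max_eq_left h
lemma tent_mem {x : ℝ} (hx : x ∈ Set.Icc (0:ℝ) 1) : tent x ∈ Set.Icc (0:ℝ) 1 := by
  obtain ⟨h0, h1⟩ := hx
  rcases le_total x (1/2) with h | h
  · rw [tent, relu_of_nonneg h0, relu_of_nonpos (by linarith : x - 1/2 ≤ 0)]
    constructor <;> linarith
  · rw [tent, relu_of_nonneg (by linarith : (0:ℝ) ≤ x),
      relu_of_nonneg (by linarith : (0:ℝ) ≤ x - 1/2)]
    constructor <;> linarith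
lemma tent_iter_mem {x : ℝ} (hx : x ∈ Set.Icc (0:ℝ) 1) (s : ℕ) :
    tent^[s] x ∈ Set.Icc (0:ℝ) 1 := by
  induction s with
  | zero => simpa
  | succ n ih => rw [Function.iterate_succ_apply']; exact tent_mem ih

lemma NN.hidden_succ (Φ : NN) (ρ : ℝ → ℝ) (x : ℕ → ℝ) (l i : ℕ) :
    Φ.hidden ρ x (l+1) i = ρ ((∑ k : Fin (l + 1), ∑ j ∈ Finset.range (Φ.arity k),
        Φ.A (l + 1) k i j * Φ.hidden ρ x k j) + Φ.b (l + 1) i) := by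
  rw [NN.hidden]

lemma NN.hidden_zero (Φ : NN) (ρ : ℝ → ℝ) (x : ℕ → ℝ) (i : ℕ) :
    Φ.hidden ρ x 0 i = if i < Φ.d then x i else 0 := by
  rw [NN.hidden]

lemma sqNet_hidden {m : ℕ} (hm : 1 ≤ m) {x : ℝ} (hx : x ∈ Set.Icc (0:ℝ) 1) :
    ∀ l : ℕ, l + 1 ≤ m →
      (sqNet m).hidden relu (fun _ => x) (l+1) 0 = tent^[l] x ∧
      (sqNet m).hidden relu (fun _ => x) (l+1) 1 = relu (tent^[l] x - 1/2) := by
  intro l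
  induction l with
  | zero =>
    intro _
    have hh0 : (sqNet m).hidden relu (fun _ => x) 0 0 = x := by
      rw [NN.hidden_zero]; simp [sqNet]
    have hsum : ∀ i, i < 2 →
        (∑ k : Fin 1, ∑ j ∈ Finset.range ((sqNet m).arity k),
          (sqNet m).A 1 k i j * (sqNet m).hidden relu (fun _ => x) k j) = x := by
      intro i hi
      rw [Fin.sum_univ_one]
      simp only [Fin.val_zero, sqNet_arity0, Finset.sum_range_one, hh0,
        sqNet_A_in hm hi, one_mul]
    constructor
    · rw [NN.hidden_succ, hsum 0 (by norm_num), sqNet_b0, add_zero,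
        Function.iterate_zero_apply]
      exact relu_of_nonneg hx.1
    · rw [NN.hidden_succ, hsum 1 (by norm_num), sqNet_b1 (le_refl 1) hm,
        Function.iterate_zero_apply, ← sub_eq_add_neg]
  | succ n ih =>
    intro hn
    obtain ⟨ih0, ih1⟩ := ih (by omega)
    have hsum : ∀ i, i < 2 →
        (∑ k : Fin (n + 2), ∑ j ∈ Finset.range ((sqNet m).arity k),
          (sqNet m).A (n+2) k i j * (sqNet m).hidden relu (fun _ => x) k j)
        = tent^[n+1] x := by
      intro i hi
      rw [Fin.sum_univ_eq_sum_range
        (fun k => ∑ j ∈ Finset.range ((sqNet m).arity k),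
          (sqNet m).A (n+2) k i j * (sqNet m).hidden relu (fun _ => x) k j) (n+2)]
      rw [Finset.sum_eq_single_of_mem (n+1) (Finset.mem_range.2 (by omega))]
      · rw [sqNet_arity_mid (by omega) (by omega), Finset.sum_range_succ,
          Finset.sum_range_one, sqNet_A_mid0 hn hi, sqNet_A_mid1 hn hi, ih0, ih1,
          Function.iterate_succ_apply', tent,
          relu_of_nonneg (tent_iter_mem hx n).1]
        ring
      · intro k hk hkne
        apply Finset.sum_eq_zero
        intro j _
        rw [sqNet_A_zero (by omega) (by omega) (by omega)]
        exact zero_mul _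
    constructor
    · have := NN.hidden_succ (sqNet m) relu (fun _ => x) (n+1) 0
      rw [this, hsum 0 (by norm_num), sqNet_b0, add_zero]
      exact relu_of_nonneg (tent_iter_mem hx (n+1)).1
    · have := NN.hidden_succ (sqNet m) relu (fun _ => x) (n+1) 1
      rw [this, hsum 1 (by norm_num), sqNet_b1 (by omega) (by omega),
        ← sub_eq_add_neg, Function.iterate_succ_apply]

lemma sqNet_hidden00 (m : ℕ) (x : ℝ) :
    (sqNet m).hidden relu (fun _ => x) 0 0 = x := by
  rw [NN.hidden_zero]; simp [sqNet]

lemma sqNet_realize {m : ℕ} (hm : 1 ≤ m) {x : ℝ} (hx : x ∈ Set.Icc (0:ℝ) 1) :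
    (sqNet m).realize relu (fun _ => x) 0
      = x - ∑ s ∈ Finset.range m, tent^[s+1] x / 4^(s+1) := by
  have hterm : ∀ s ∈ Finset.range m,
      (∑ j ∈ Finset.range ((sqNet m).arity (s+1)),
        (sqNet m).A (m+1) (s+1) 0 j * (sqNet m).hidden relu (fun _ => x) (s+1) j)
      = -(tent^[s+1] x / 4^(s+1)) := by
    intro s hs
    have hs' := Finset.mem_range.1 hs
    obtain ⟨h0, h1⟩ := sqNet_hidden hm hx s (by omega)
    rw [sqNet_arity_mid (by omega) (by omega), Finset.sum_range_succ,
      Finset.sum_range_one, sqNet_A_topk0 (by omega) (by omega),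
      sqNet_A_topk1 (by omega) (by omega), h0, h1,
      Function.iterate_succ_apply', tent, relu_of_nonneg (tent_iter_mem hx s).1]
    have h4 : (4:ℝ)^(s+1) ≠ 0 := by positivity
    field_simp
    ring
  simp only [NN.realize, show (sqNet m).L = m + 1 from rfl]
  have hconv : (∑ k : Fin (sqNet m).L, ∑ j ∈ Finset.range ((sqNet m).arity k),
        (sqNet m).A (m+1) k 0 j * (sqNet m).hidden relu (fun _ => x) k j)
      = ∑ k ∈ Finset.range (m+1), ∑ j ∈ Finset.range ((sqNet m).arity k),
        (sqNet m).A (m+1) k 0 j * (sqNet m).hidden relu (fun _ => x) k j :=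
    by
      exact Fin.sum_univ_eq_sum_range (fun k => ∑ j ∈ Finset.range ((sqNet m).arity k), (sqNet m).A (m+1) k 0 j * (sqNet m).hidden relu (fun _ => x) k j) (m+1)
  rw [hconv]
  rw [Finset.sum_range_succ', Finset.sum_congr rfl hterm, sqNet_b0, add_zero,
    sqNet_arity0, Finset.sum_range_one, sqNet_A_top0, sqNet_hidden00, one_mul,
    Finset.sum_neg_distrib]
  ring

lemma ncard_prod_le (a b : ℕ) (P : ℕ × ℕ → Prop) :
    {p : ℕ × ℕ | p.1 < a ∧ p.2 < b ∧ P p}.ncard ≤ a * b := by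
  have hsub : {p : ℕ × ℕ | p.1 < a ∧ p.2 < b ∧ P p}
      ⊆ ↑(Finset.range a ×ˢ Finset.range b) := by
    rintro ⟨i, j⟩ ⟨h1, h2, _⟩
    simp [Finset.mem_product, h1, h2]
  calc {p : ℕ × ℕ | p.1 < a ∧ p.2 < b ∧ P p}.ncard
      ≤ (↑(Finset.range a ×ˢ Finset.range b) : Set (ℕ × ℕ)).ncard :=
        Set.ncard_le_ncard hsub (Finset.range a ×ˢ Finset.range b).finite_toSet
    _ = a * b := by
        rw [Set.ncard_coe_finset, Finset.card_product, Finset.card_range,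
          Finset.card_range]

lemma ncard_fst_le (a : ℕ) (P : ℕ → Prop) : {i | i < a ∧ P i}.ncard ≤ a := by
  have hsub : {i | i < a ∧ P i} ⊆ ↑(Finset.range a) := by
    rintro i ⟨h1, _⟩
    simp [h1]
  calc {i | i < a ∧ P i}.ncard ≤ (↑(Finset.range a) : Set ℕ).ncard :=
        Set.ncard_le_ncard hsub (Finset.range a).finite_toSet
    _ = a := by rw [Set.ncard_coe_finset, Finset.card_range]

lemma sqNet_arity_le (m l : ℕ) : (sqNet m).arity l ≤ 2 := by
  simp only [sqNet]
  split_ifs <;> norm_num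

lemma sqNet_numWeights_le {m : ℕ} (hm : 1 ≤ m) : (sqNet m).numWeights ≤ 8 * m + 4 := by
  rw [NN.numWeights, show (sqNet m).L = m + 1 from rfl,
    Finset.sum_Icc_succ_top (by omega : 1 ≤ m + 1)]
  have hmid : ∀ l ∈ Finset.Icc 1 m,
      ((∑ k ∈ Finset.range l,
        {p : ℕ × ℕ | p.1 < (sqNet m).arity l ∧ p.2 < (sqNet m).arity k ∧
          (sqNet m).A l k p.1 p.2 ≠ 0}.ncard) +
        {i | i < (sqNet m).arity l ∧ (sqNet m).b l i ≠ 0}.ncard) ≤ 6 := by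
    intro l hl
    rw [Finset.mem_Icc] at hl
    have hsum : (∑ k ∈ Finset.range l,
        {p : ℕ × ℕ | p.1 < (sqNet m).arity l ∧ p.2 < (sqNet m).arity k ∧
          (sqNet m).A l k p.1 p.2 ≠ 0}.ncard) ≤ 4 := by
      rw [Finset.sum_eq_single_of_mem (l-1) (Finset.mem_range.2 (by omega))]
      · calc {p : ℕ × ℕ | p.1 < (sqNet m).arity l ∧ p.2 < (sqNet m).arity (l-1) ∧
            (sqNet m).A l (l-1) p.1 p.2 ≠ 0}.ncard
            ≤ (sqNet m).arity l * (sqNet m).arity (l-1) := ncard_prod_le _ _ _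
          _ ≤ 2 * 2 := Nat.mul_le_mul (sqNet_arity_le m l) (sqNet_arity_le m (l-1))
          _ = 4 := rfl
      · intro k hk hkne
        have hempty : {p : ℕ × ℕ | p.1 < (sqNet m).arity l ∧ p.2 < (sqNet m).arity k ∧
            (sqNet m).A l k p.1 p.2 ≠ 0} = ∅ := by
          ext ⟨i, j⟩
          simp only [Set.mem_setOf_eq, Set.mem_empty_iff_false, iff_false]
          rintro ⟨-, -, hA⟩
          exact hA (sqNet_A_zero (by omega) (by omega)
            (by rw [Finset.mem_range] at hk; omega) i j)
        rw [hempty, Set.ncard_empty]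
    have hb : {i | i < (sqNet m).arity l ∧ (sqNet m).b l i ≠ 0}.ncard ≤ 2 :=
      le_trans (ncard_fst_le _ _) (sqNet_arity_le m l)
    omega
  have h1 : (∑ l ∈ Finset.Icc 1 m,
      ((∑ k ∈ Finset.range l,
        {p : ℕ × ℕ | p.1 < (sqNet m).arity l ∧ p.2 < (sqNet m).arity k ∧
          (sqNet m).A l k p.1 p.2 ≠ 0}.ncard) +
        {i | i < (sqNet m).arity l ∧ (sqNet m).b l i ≠ 0}.ncard)) ≤ 6 * m := by
    calc _ ≤ ∑ _l ∈ Finset.Icc 1 m, 6 := Finset.sum_le_sum hmid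
      _ = 6 * m := by rw [Finset.sum_const, Nat.card_Icc]; simp [Nat.mul_comm]
  have h2 : ((∑ k ∈ Finset.range (m+1),
      {p : ℕ × ℕ | p.1 < (sqNet m).arity (m+1) ∧ p.2 < (sqNet m).arity k ∧
        (sqNet m).A (m+1) k p.1 p.2 ≠ 0}.ncard) +
      {i | i < (sqNet m).arity (m+1) ∧ (sqNet m).b (m+1) i ≠ 0}.ncard)
      ≤ 2 * (m + 1) + 2 := by
    have hs : (∑ k ∈ Finset.range (m+1),
        {p : ℕ × ℕ | p.1 < (sqNet m).arity (m+1) ∧ p.2 < (sqNet m).arity k ∧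
          (sqNet m).A (m+1) k p.1 p.2 ≠ 0}.ncard) ≤ 2 * (m + 1) := by
      calc _ ≤ ∑ k ∈ Finset.range (m+1), 2 := by
            apply Finset.sum_le_sum
            intro k _
            calc {p : ℕ × ℕ | p.1 < (sqNet m).arity (m+1) ∧ p.2 < (sqNet m).arity k ∧
                (sqNet m).A (m+1) k p.1 p.2 ≠ 0}.ncard
                ≤ (sqNet m).arity (m+1) * (sqNet m).arity k := ncard_prod_le _ _ _
              _ ≤ 1 * 2 := Nat.mul_le_mul (le_of_eq (sqNet_arity_top m)) (sqNet_arity_le m k)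
              _ = 2 := by norm_num
        _ = 2 * (m + 1) := by rw [Finset.sum_const, Finset.card_range]; simp [Nat.mul_comm]
    have hb : {i | i < (sqNet m).arity (m+1) ∧ (sqNet m).b (m+1) i ≠ 0}.ncard ≤ 2 :=
      le_trans (ncard_fst_le _ _) (le_trans (le_of_eq (sqNet_arity_top m)) (by norm_num))
    omega
  omega

lemma sqNet_numNeurons_le (m : ℕ) : (sqNet m).numNeurons ≤ 2 * m + 4 := by
  rw [NN.numNeurons, show (sqNet m).L = m + 1 from rfl]
  calc (∑ l ∈ Finset.range (m + 1 + 1), (sqNet m).arity l)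
      ≤ ∑ _l ∈ Finset.range (m + 1 + 1), 2 :=
        Finset.sum_le_sum fun l _ => sqNet_arity_le m l
    _ = 2 * m + 4 := by rw [Finset.sum_const, Finset.card_range]; simp; omega

lemma tent_left {x : ℝ} (h0 : 0 ≤ x) (h1 : x ≤ 1/2) : tent x = 2 * x := by
  rw [tent, relu_of_nonneg h0, relu_of_nonpos (by linarith : x - 1/2 ≤ 0)]; ring

lemma tent_right {x : ℝ} (h0 : 1/2 ≤ x) (h1 : x ≤ 1) : tent x = 2 - 2 * x := by
  rw [tent, relu_of_nonneg (by linarith : (0:ℝ) ≤ x),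
    relu_of_nonneg (by linarith : (0:ℝ) ≤ x - 1/2)]; ring

lemma tent_zero : tent 0 = 0 := by
  rw [tent_left le_rfl (by norm_num)]; ring

lemma tent_iter_zero (s : ℕ) : tent^[s] 0 = 0 := by
  induction s with
  | zero => rfl
  | succ n ih => rw [Function.iterate_succ_apply', ih, tent_zero]
def err (m : ℕ) (x : ℝ) : ℝ :=
  x - (∑ s ∈ Finset.range m, tent^[s+1] x / 4 ^ (s+1)) - x ^ 2

lemma err_zero (x : ℝ) : err 0 x = x - x ^ 2 := by simp [err]

lemma err_succ_left {x : ℝ} (h0 : 0 ≤ x) (h1 : x ≤ 1/2) (m : ℕ) :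
    err (m+1) x = err m (2*x) / 4 := by
  have hiter : ∀ s : ℕ, tent^[s+1] x = tent^[s] (2*x) := by
    intro s
    rw [Function.iterate_succ_apply, tent_left h0 h1]
  simp only [err, Finset.sum_range_succ']
  rw [hiter 0]
  have : ∀ s ∈ Finset.range m, tent^[s+1+1] x / 4 ^ (s+1+1)
      = (tent^[s+1] (2*x) / 4 ^ (s+1)) / 4 := by
    intro s _
    rw [hiter (s+1)]; ring
  rw [Finset.sum_congr rfl this, ← Finset.sum_div]
  simp only [Function.iterate_zero_apply]
  ring

lemma err_succ_right {x : ℝ} (h0 : 1/2 ≤ x) (h1 : x ≤ 1) (m : ℕ) :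
    err (m+1) x = err m (2 - 2*x) / 4 := by
  have hiter : ∀ s : ℕ, tent^[s+1] x = tent^[s] (2 - 2*x) := by
    intro s
    rw [Function.iterate_succ_apply, tent_right h0 h1]
  simp only [err, Finset.sum_range_succ']
  rw [hiter 0]
  have : ∀ s ∈ Finset.range m, tent^[s+1+1] x / 4 ^ (s+1+1)
      = (tent^[s+1] (2 - 2*x) / 4 ^ (s+1)) / 4 := by
    intro s _
    rw [hiter (s+1)]; ring
  rw [Finset.sum_congr rfl this, ← Finset.sum_div]
  simp only [Function.iterate_zero_apply]
  ring

lemma err_bound (m : ℕ) : ∀ x ∈ Set.Icc (0:ℝ) 1, |err m x| ≤ (1/2) ^ m := by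
  induction m with
  | zero =>
    intro x ⟨h0, h1⟩
    rw [err_zero, abs_le]
    constructor <;> nlinarith
  | succ n ih =>
    intro x ⟨h0, h1⟩
    rcases le_total x (1/2) with h | h
    · rw [err_succ_left h0 h, abs_div]
      have := ih (2*x) ⟨by linarith, by linarith⟩
      rw [abs_of_nonneg (by norm_num : (0:ℝ) ≤ 4)]
      rw [pow_succ]
      nlinarith [pow_nonneg (by norm_num : (0:ℝ) ≤ 1/2) n]
    · rw [err_succ_right h h1, abs_div]
      have := ih (2 - 2*x) ⟨by linarith, by linarith⟩
      rw [abs_of_nonneg (by norm_num : (0:ℝ) ≤ 4)]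
      rw [pow_succ]
      nlinarith [pow_nonneg (by norm_num : (0:ℝ) ≤ 1/2) n]

lemma err_lip (m : ℕ) : ∀ x ∈ Set.Icc (0:ℝ) 1, ∀ y ∈ Set.Icc (0:ℝ) 1,
    |err m x - err m y| ≤ (1/2) ^ m * |x - y| := by
  induction m with
  | zero =>
    rintro x ⟨h0, h1⟩ y ⟨h2, h3⟩
    rw [err_zero, err_zero, pow_zero, one_mul]
    have : (x - x^2) - (y - y^2) = (x - y) * (1 - (x + y)) := by ring
    rw [this, abs_mul]
    have : |1 - (x+y)| ≤ 1 := by rw [abs_le]; constructor <;> linarith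
    nlinarith [abs_nonneg (x - y)]
  | succ n ih =>
    have key : ∀ x ∈ Set.Icc (0:ℝ) 1, ∀ y ∈ Set.Icc (0:ℝ) 1,
        ((x ≤ 1/2 ∧ y ≤ 1/2) ∨ (1/2 ≤ x ∧ 1/2 ≤ y)) →
        |err (n+1) x - err (n+1) y| ≤ (1/2) ^ (n+1) * |x - y| := by
      rintro x ⟨h0, h1⟩ y ⟨h2, h3⟩ (⟨hx, hy⟩ | ⟨hx, hy⟩)
      · rw [err_succ_left h0 hx, err_succ_left h2 hy, div_sub_div_same, abs_div,
          abs_of_nonneg (by norm_num : (0:ℝ) ≤ 4)]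
        have := ih (2*x) ⟨by linarith, by linarith⟩ (2*y) ⟨by linarith, by linarith⟩
        have h2xy : |2*x - 2*y| = 2 * |x - y| := by
          rw [show 2*x - 2*y = 2*(x-y) by ring, abs_mul, abs_of_nonneg]; norm_num
        rw [h2xy] at this
        rw [pow_succ]
        linarith
      · rw [err_succ_right hx h1, err_succ_right hy h3, div_sub_div_same, abs_div,
          abs_of_nonneg (by norm_num : (0:ℝ) ≤ 4)]
        have := ih (2 - 2*x) ⟨by linarith, by linarith⟩ (2 - 2*y) ⟨by linarith, by linarith⟩
        have h2xy : |(2 - 2*x) - (2 - 2*y)| = 2 * |x - y| := by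
          rw [show (2 - 2*x) - (2 - 2*y) = -(2*(x-y)) by ring, abs_neg, abs_mul,
            abs_of_nonneg]; norm_num
        rw [h2xy] at this
        rw [pow_succ]
        linarith
    intro x hx y hy
    rcases le_total x (1/2) with h | h <;> rcases le_total y (1/2) with h' | h'
    · exact key x hx y hy (Or.inl ⟨h, h'⟩)
    · -- x ≤ 1/2 ≤ y
      have hhalf : (1/2 : ℝ) ∈ Set.Icc (0:ℝ) 1 := by norm_num
      have t1 := key x hx (1/2) hhalf (Or.inl ⟨h, le_refl _⟩)
      have t2 := key (1/2) hhalf y hy (Or.inr ⟨le_refl _, h'⟩)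
      have habs : |x - 1/2| + |1/2 - y| = |x - y| := by
        rw [abs_of_nonpos (by linarith), abs_of_nonpos (by linarith),
          abs_of_nonpos (by linarith)]
        ring
      calc |err (n+1) x - err (n+1) y|
          ≤ |err (n+1) x - err (n+1) (1/2)| + |err (n+1) (1/2) - err (n+1) y| :=
            abs_sub_le _ _ _
        _ ≤ (1/2)^(n+1) * |x - 1/2| + (1/2)^(n+1) * |1/2 - y| := by linarith
        _ = (1/2)^(n+1) * |x - y| := by rw [← habs]; ring
    · have hhalf : (1/2 : ℝ) ∈ Set.Icc (0:ℝ) 1 := by norm_num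
      have t1 := key x hx (1/2) hhalf (Or.inr ⟨h, le_refl _⟩)
      have t2 := key (1/2) hhalf y hy (Or.inl ⟨le_refl _, h'⟩)
      have habs : |x - 1/2| + |1/2 - y| = |x - y| := by
        rw [abs_of_nonneg (by linarith), abs_of_nonneg (by linarith),
          abs_of_nonneg (by linarith)]
        ring
      calc |err (n+1) x - err (n+1) y|
          ≤ |err (n+1) x - err (n+1) (1/2)| + |err (n+1) (1/2) - err (n+1) y| :=
            abs_sub_le _ _ _
        _ ≤ (1/2)^(n+1) * |x - 1/2| + (1/2)^(n+1) * |1/2 - y| := by linarith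
        _ = (1/2)^(n+1) * |x - y| := by rw [← habs]; ring
    · exact key x hx y hy (Or.inr ⟨h, h'⟩)


/-- **Approximation of the square function in `W^{1,∞}`.**
There are constants `c₁, c₂, c₃, c₄ > 0` such that for every `ε ∈ (0, 1/2)` there is a
ReLU network with one-dimensional input and output, of size `O(log₂(1/ε))` in weights,
layers and neurons, whose realization `g` satisfies `sup_{[0,1]} |g − x²| ≤ ε`,
`g − x²` is `ε`-Lipschitz on `[0,1]`, `g(0) = 0`, and `g` is `c₄`-Lipschitz on
`[0,1]`. -/
theorem square_approximation_network :
    ∃ c₁ c₂ c₃ c₄ : ℝ, 0 < c₁ ∧ 0 < c₂ ∧ 0 < c₃ ∧ 0 < c₄ ∧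
      ∀ ε ∈ Set.Ioo (0 : ℝ) (1 / 2),
        ∃ Φ : NN, Φ.d = 1 ∧ Φ.outDim = 1 ∧
          (Φ.numWeights : ℝ) ≤ c₁ * Real.logb 2 (1 / ε) ∧
          (Φ.L : ℝ) ≤ c₂ * Real.logb 2 (1 / ε) ∧
          (Φ.numNeurons : ℝ) ≤ c₃ * Real.logb 2 (1 / ε) ∧
          (∀ x ∈ Set.Icc (0 : ℝ) 1,
            |Φ.realize relu (fun _ => x) 0 - x ^ 2| ≤ ε) ∧
          (∀ x ∈ Set.Icc (0 : ℝ) 1, ∀ y ∈ Set.Icc (0 : ℝ) 1,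
            |(Φ.realize relu (fun _ => x) 0 - x ^ 2) -
              (Φ.realize relu (fun _ => y) 0 - y ^ 2)| ≤ ε * |x - y|) ∧
          Φ.realize relu (fun _ => (0 : ℝ)) 0 = 0 ∧
          (∀ x ∈ Set.Icc (0 : ℝ) 1, ∀ y ∈ Set.Icc (0 : ℝ) 1,
            |Φ.realize relu (fun _ => x) 0 - Φ.realize relu (fun _ => y) 0| ≤
              c₄ * |x - y|) := by
  refine ⟨24, 4, 12, 3, by norm_num, by norm_num, by norm_num, by norm_num, ?_⟩
  rintro ε ⟨hε0, hε2⟩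
  set r := Real.logb 2 (1/ε) with hrdef
  have hε1 : (2:ℝ) ≤ 1/ε := by rw [le_div_iff₀ hε0]; linarith
  have hr1 : (1:ℝ) ≤ r := by
    have h2 : Real.logb 2 2 ≤ Real.logb 2 (1/ε) :=
      (Real.logb_le_logb (by norm_num) (by norm_num) (by positivity)).2 hε1
    rwa [Real.logb_self_eq_one (b := 2) (by norm_num)] at h2
  set m := ⌈r⌉₊ with hmdef
  have hm1 : 1 ≤ m := Nat.one_le_ceil_iff.2 (by linarith)
  have hrm : r ≤ (m:ℝ) := Nat.le_ceil r
  have hmr : (m:ℝ) ≤ 2 * r := by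
    have := Nat.ceil_lt_add_one (by linarith : (0:ℝ) ≤ r)
    rw [← hmdef] at this
    linarith
  have hpow : (1/2:ℝ)^m ≤ ε := by
    have h2m : (1:ℝ)/ε ≤ 2^m := by
      calc (1:ℝ)/ε = (2:ℝ) ^ r := (Real.rpow_logb (by norm_num) (by norm_num)
            (by positivity)).symm
        _ ≤ (2:ℝ) ^ (m:ℝ) := (Real.rpow_le_rpow_left_iff (by norm_num)).2 hrm
        _ = (2:ℝ) ^ m := Real.rpow_natCast 2 m
    rw [div_pow, one_pow, div_le_iff₀ (by positivity)]
    have := (div_le_iff₀ hε0).1 h2m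
    nlinarith
  have hg : ∀ x ∈ Set.Icc (0:ℝ) 1,
      (sqNet m).realize relu (fun _ => x) 0 - x ^ 2 = err m x := by
    intro x hx
    rw [sqNet_realize hm1 hx]; rfl
  refine ⟨sqNet m, rfl, sqNet_arity_top m, ?_, ?_, ?_, ?_, ?_, ?_, ?_⟩
  · calc ((sqNet m).numWeights : ℝ) ≤ ((8 * m + 4 : ℕ) : ℝ) :=
        Nat.cast_le.2 (sqNet_numWeights_le hm1)
      _ ≤ 12 * (m:ℝ) := by
          have h1m : (1:ℝ) ≤ (m:ℝ) := by exact_mod_cast hm1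
          push_cast; linarith
      _ ≤ 24 * r := by linarith
  · calc ((sqNet m).L : ℝ) = ((m + 1 : ℕ) : ℝ) := rfl
      _ ≤ 2 * (m:ℝ) := by
          have h1m : (1:ℝ) ≤ (m:ℝ) := by exact_mod_cast hm1
          push_cast; linarith
      _ ≤ 4 * r := by linarith
  · calc ((sqNet m).numNeurons : ℝ) ≤ ((2 * m + 4 : ℕ) : ℝ) :=
        Nat.cast_le.2 (sqNet_numNeurons_le m)
      _ ≤ 6 * (m:ℝ) := by
          have h1m : (1:ℝ) ≤ (m:ℝ) := by exact_mod_cast hm1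
          push_cast; linarith
      _ ≤ 12 * r := by linarith
  · intro x hx
    rw [hg x hx]
    exact le_trans (err_bound m x hx) hpow
  · intro x hx y hy
    rw [hg x hx, hg y hy]
    calc |err m x - err m y| ≤ (1/2)^m * |x - y| := err_lip m x hx y hy
      _ ≤ ε * |x - y| := mul_le_mul_of_nonneg_right hpow (abs_nonneg _)
  · rw [sqNet_realize hm1 (by norm_num : (0:ℝ) ∈ Set.Icc (0:ℝ) 1)]
    simp [tent_iter_zero]
  · intro x hx y hy
    have he : |err m x - err m y| ≤ ε * |x - y| :=
      le_trans (err_lip m x hx y hy)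
        (mul_le_mul_of_nonneg_right hpow (abs_nonneg _))
    have hsq : |x^2 - y^2| ≤ 2 * |x - y| := by
      rw [show x^2 - y^2 = (x + y) * (x - y) by ring, abs_mul]
      have h2 : |x + y| ≤ 2 := by
        rw [abs_le]; obtain ⟨a,b⟩ := hx; obtain ⟨c,d⟩ := hy
        constructor <;> linarith
      nlinarith [abs_nonneg (x - y)]
    have key : (sqNet m).realize relu (fun _ => x) 0 - (sqNet m).realize relu (fun _ => y) 0
        = (err m x - err m y) + (x^2 - y^2) := by
      have h1 := hg x hx; have h2 := hg y hy
      linarith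
    rw [key]
    calc |(err m x - err m y) + (x^2 - y^2)|
        ≤ |err m x - err m y| + |x^2 - y^2| := abs_add_le _ _
      _ ≤ ε * |x - y| + 2 * |x - y| := by linarith
      _ ≤ 3 * |x - y| := by nlinarith [abs_nonneg (x - y)]


end
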